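/- For every positive integer s there is a finite group G such that |x^G| ≤ 2 for every commutator x of prime power order in G, while the Fitting subgroup of G has index 2^s in G. -/

import Mathlib

def dihedralParityFun {n : ℕ} : DihedralGroup n → Multiplicative (ZMod 2)
  | DihedralGroup.r _ => Multiplicative.ofAdd 0
  | DihedralGroup.sr _ => Multiplicative.ofAdd 1

/-- The parity homomorphism from a dihedral group to `Multiplicative (ZMod 2)`,
sending rotations to `0` and reflections to `1`. -/
def dihedralParity (n : ℕ) : DihedralGroup n →* Multiplicative (ZMod 2) where
  toFun := dihedralParityFun
  map_one' := rfl
  map_mul' := by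
    rintro (a | a) (b | b) <;> simp only [DihedralGroup.r_mul_r, DihedralGroup.r_mul_sr,
      DihedralGroup.sr_mul_r, DihedralGroup.sr_mul_sr, dihedralParityFun] <;> decide

theorem dihedralParity_r {n : ℕ} (k : ZMod n) : dihedralParity n (DihedralGroup.r k) = 1 := rfl

theorem dihedralParity_sr {n : ℕ} (k : ZMod n) :
    dihedralParity n (DihedralGroup.sr k) ≠ 1 := by
  show Multiplicative.ofAdd (1 : ZMod 2) ≠ 1
  decide

open scoped commutatorElement

/-- For every `s ≥ 1` there is a finite group `G` in which every commutator of prime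
power order has conjugacy class of size at most `2`, while the Fitting subgroup (the
largest nilpotent normal subgroup) has index `2^s`. -/
theorem exists_group_small_commutator_classes_large_fitting_index (s : ℕ) (hs : 0 < s) :
    ∃ (G : Type) (_ : Group G) (_ : Finite G),
      (∀ x : G, (∃ a b : G, x = a⁻¹ * b⁻¹ * a * b) → IsPrimePow (orderOf x) →
        Nat.card {h : G // IsConj x h} ≤ 2) ∧
      ∃ F : Subgroup G,
        IsGreatest {H : Subgroup G | H.Normal ∧ Group.IsNilpotent H} F ∧
        F.index = 2 ^ s := by
  classical
  -- distinct odd primes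
  set p : Fin s → ℕ := fun i => Nat.nth Nat.Prime (i + 1) with hpdef
  have hprime : ∀ i, (p i).Prime := fun i => Nat.prime_nth_prime _
  have hlt : ∀ i, 2 < p i := by
    intro i
    have := (Nat.nth_strictMono Nat.infinite_setOf_prime) (show 0 < (i : ℕ) + 1 by omega)
    rwa [Nat.nth_prime_zero_eq_two] at this
  have hinj : ∀ i j, p i = p j → i = j := by
    intro i j h
    have := (Nat.nth_strictMono Nat.infinite_setOf_prime).injective h
    ext
    omega
  haveI hnz : ∀ i, NeZero (p i) := fun i => ⟨(hprime i).pos.ne'⟩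
  haveI hfin : ∀ i, Finite (DihedralGroup (p i)) := fun i => Finite.of_fintype _
  refine ⟨∀ i, DihedralGroup (p i), inferInstance, inferInstance, ?_, ?_⟩
  · -- commutators of prime power order have small classes
    rintro x ⟨a, b, hx⟩ hpp
    have hrot : ∀ i, ∃ k, x i = DihedralGroup.r k := by
      intro i
      have : x i = (a i)⁻¹ * (b i)⁻¹ * (a i) * (b i) := by rw [hx]; rfl
      rw [this]
      rcases a i with k | k <;> rcases b i with l | l <;> exact ⟨_, rfl⟩
    have hord : ∀ i, x i ≠ 1 → orderOf (x i) = p i := by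
      intro i hne
      obtain ⟨k, hk⟩ := hrot i
      have hk0 : k ≠ 0 := by
        rintro rfl
        exact hne (by rw [hk, DihedralGroup.one_def])
      rw [hk, DihedralGroup.orderOf_r]
      have hvlt : k.val < p i := ZMod.val_lt k
      have hv0 : k.val ≠ 0 := by
        intro h
        exact hk0 (by rwa [← ZMod.val_eq_zero])
      have : Nat.gcd (p i) k.val = 1 :=
        (hprime i).coprime_iff_not_dvd.mpr (Nat.not_dvd_of_pos_of_lt
          (Nat.pos_of_ne_zero hv0) hvlt)
      rw [this, Nat.div_one]
    obtain ⟨q, m, hq, hm, hqm⟩ := hpp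
    have hdvd : ∀ i, orderOf (x i) ∣ orderOf x := by
      intro i
      apply orderOf_dvd_of_pow_eq_one
      have : (x ^ orderOf x) i = 1 := by rw [pow_orderOf_eq_one]; rfl
      simpa using this
    have key : ∀ i, x i ≠ 1 → p i = q := by
      intro i hne
      have h1 : p i ∣ q ^ m := by
        rw [hqm]
        exact (hord i hne) ▸ hdvd i
      have h2 : p i ∣ q := (hprime i).dvd_of_dvd_pow h1
      exact ((Nat.prime_dvd_prime_iff_eq (hprime i) hq.nat_prime).mp h2)
    have hex : ∃ i, x i ≠ 1 := by
      by_contra hcon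
      push_neg at hcon
      have : x = 1 := funext fun i => hcon i
      rw [this, orderOf_one] at hqm
      exact not_isPrimePow_one ⟨q, m, hq, hm, hqm⟩
    obtain ⟨i₀, hi₀⟩ := hex
    have huniq : ∀ j, j ≠ i₀ → x j = 1 := by
      intro j hj
      by_contra hne
      exact hj (hinj j i₀ ((key j hne).trans (key i₀ hi₀).symm))
    obtain ⟨k, hk⟩ := hrot i₀
    have hsub : {h : (∀ i, DihedralGroup (p i)) | IsConj x h} ⊆
        {x, Function.update x i₀ (DihedralGroup.r (-k))} := by
      rintro h ⟨c, hc⟩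
      set cc : ∀ i, DihedralGroup (p i) := (c : ∀ i, DihedralGroup (p i)) with hccdef
      have hh : ∀ j, h j = cc j * x j * (cc j)⁻¹ := by
        intro j
        have h1 : cc * x = h * cc := hc.eq
        have h2 : cc j * x j = h j * cc j := by rw [show cc j * x j = (cc * x) j from rfl, h1]; rfl
        exact eq_mul_inv_of_mul_eq h2.symm
      have hother : ∀ j, j ≠ i₀ → h j = x j := by
        intro j hj
        rw [hh j, huniq j hj]
        simp
      rcases (show ∀ g : DihedralGroup (p i₀), g * DihedralGroup.r k * g⁻¹ = DihedralGroup.r k ∨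
          g * DihedralGroup.r k * g⁻¹ = DihedralGroup.r (-k) from by
        rintro (m | m)
        · left
          show DihedralGroup.r m * DihedralGroup.r k * DihedralGroup.r (-m) = _
          simp [add_comm]
        · right
          show DihedralGroup.sr m * DihedralGroup.r k * DihedralGroup.sr m = _
          simp) (cc i₀) with hcase | hcase
      · left
        funext j
        by_cases hj : j = i₀
        · subst hj
          rw [hh j, hk, hcase]
        · exact hother j hj
      · right
        funext j
        by_cases hj : j = i₀
        · subst hj
          rw [hh j, hk, hcase, Function.update_self]
        · rw [hother j hj, Function.update_of_ne hj]
    calc Nat.card {h : (∀ i, DihedralGroup (p i)) // IsConj x h}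
        = Set.ncard {h : (∀ i, DihedralGroup (p i)) | IsConj x h} := rfl
      _ ≤ Set.ncard {x, Function.update x i₀ (DihedralGroup.r (-k))} :=
          Set.ncard_le_ncard hsub (Set.toFinite _)
      _ ≤ 2 := by
          refine (Set.ncard_insert_le _ _).trans ?_
          simp
  · -- the Fitting subgroup
    set φ : (∀ i, DihedralGroup (p i)) →* (Fin s → Multiplicative (ZMod 2)) :=
      { toFun := fun x i => dihedralParity (p i) (x i)
        map_one' := funext fun i => map_one _
        map_mul' := fun a b => funext fun i => map_mul _ _ _ } with hφdef
    have hmem : ∀ x : (∀ i, DihedralGroup (p i)),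
        x ∈ φ.ker ↔ ∀ i, ∃ k, x i = DihedralGroup.r k := by
      intro x
      rw [MonoidHom.mem_ker, funext_iff]
      constructor
      · intro h i
        rcases hx : x i with k | k
        · exact ⟨k, rfl⟩
        · exact absurd (by simpa [hφdef, hx] using h i) (dihedralParity_sr k)
      · intro h i
        obtain ⟨k, hk⟩ := h i
        simp [hφdef, hk, dihedralParity_r]
    refine ⟨φ.ker, ⟨⟨inferInstance, ?_⟩, ?_⟩, ?_⟩
    · -- nilpotent (indeed abelian)
      have hcomm : ∀ a b : φ.ker, a * b = b * a := by
        rintro ⟨a, ha⟩ ⟨b, hb⟩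
        rw [hmem] at ha hb
        ext j
        show (a * b) j = (b * a) j
        obtain ⟨k, hk⟩ := ha j
        obtain ⟨l, hl⟩ := hb j
        simp [hk, hl, add_comm]
      letI : CommGroup φ.ker := { (inferInstance : Group φ.ker) with mul_comm := hcomm }
      exact CommGroup.isNilpotent
    · -- maximality
      rintro H ⟨hnorm, hnilp⟩ h hh
      rw [hmem]
      intro i
      rcases hsr : h i with k | j
      · exact ⟨k, rfl⟩
      exfalso
      set e : (∀ i, DihedralGroup (p i)) :=
        Function.update 1 i (DihedralGroup.r 1) with hedef
      have hc_mem : e * h * e⁻¹ * h⁻¹ ∈ H :=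
        H.mul_mem (hnorm.conj_mem h hh e) (H.inv_mem hh)
      -- the iterated commutators
      set d : ℕ → H := fun n => (fun c => ⁅c, (⟨h, hh⟩ : H)⁆)^[n] ⟨_, hc_mem⟩ with hddef
      have hd0 : d 0 = ⟨_, hc_mem⟩ := rfl
      have hdsucc : ∀ n, d (n + 1) = ⁅d n, (⟨h, hh⟩ : H)⁆ := by
        intro n
        rw [hddef]
        simp [Function.iterate_succ_apply']
      have hval : ∀ n, ((d n : H) : ∀ i, DihedralGroup (p i)) i =
          DihedralGroup.r (2 ^ (n + 1)) := by
        intro n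
        induction n with
        | zero =>
            rw [hd0]
            show (e * h * e⁻¹ * h⁻¹) i = _
            simp only [Pi.mul_apply, Pi.inv_apply, hedef, Function.update_self, hsr]
            show DihedralGroup.r 1 * DihedralGroup.sr j * (DihedralGroup.r 1)⁻¹ *
              (DihedralGroup.sr j)⁻¹ = _
            show DihedralGroup.r 1 * DihedralGroup.sr j * DihedralGroup.r (-1) *
              DihedralGroup.sr j = _
            simp
            ring_nf
        | succ n ih =>
            rw [hdsucc n]
            have : ((⁅d n, (⟨h, hh⟩ : H)⁆ : H) : ∀ i, DihedralGroup (p i)) i =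
                ⁅((d n : H) : ∀ i, DihedralGroup (p i)) i, h i⁆ := rfl
            rw [this, ih, hsr, commutatorElement_def]
            show DihedralGroup.r (2 ^ (n+1)) * DihedralGroup.sr j *
              DihedralGroup.r (-(2 ^ (n+1))) * DihedralGroup.sr j = _
            simp
            ring_nf
      have hlcs : ∀ n, d n ∈ (⊤ : Subgroup H).lowerCentralSeries n := by
        intro n
        induction n with
        | zero => exact Subgroup.mem_top _
        | succ n ih =>
            rw [hdsucc n]
            exact Subgroup.commutator_mem_commutator ih (Subgroup.mem_top _)
      obtain ⟨n, hn⟩ := nilpotent_iff_lowerCentralSeries.mp hnilp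
      have hdn : d n = 1 := by
        have := hlcs n
        rwa [hn, Subgroup.mem_bot] at this
      have : DihedralGroup.r ((2 : ZMod (p i)) ^ (n + 1)) = DihedralGroup.r 0 := by
        rw [← hval n, hdn]
        rfl
      have h20 : ((2 : ZMod (p i))) ^ (n + 1) = 0 := by injection this
      have : (p i) ∣ 2 ^ (n + 1) := by
        have := h20
        rw [show ((2 : ZMod (p i))) = ((2 : ℕ) : ZMod (p i)) by push_cast; ring,
          ← Nat.cast_pow, ZMod.natCast_eq_zero_iff] at this
        exact this
      have := ((hprime i).dvd_of_dvd_pow this)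
      have h4 := Nat.le_of_dvd (by norm_num) this
      have h5 := hlt i
      omega
    · -- the index
      rw [Subgroup.index_ker]
      have hsurj : Function.Surjective φ := by
        intro v
        refine ⟨fun i => if v i = Multiplicative.ofAdd 0 then DihedralGroup.r 0
          else DihedralGroup.sr 0, funext fun i => ?_⟩
        by_cases h : v i = Multiplicative.ofAdd 0
        · simp [hφdef, h, dihedralParity_r]
        · have hv : v i = Multiplicative.ofAdd 1 := by
            rcases (show ∀ z : Multiplicative (ZMod 2), z = Multiplicative.ofAdd 0 ∨
              z = Multiplicative.ofAdd 1 from by decide) (v i) with h' | h'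
            · exact absurd h' h
            · exact h'
          simp [hφdef, h, hv]
          rfl
      rw [MonoidHom.range_eq_top.mpr hsurj]
      rw [Subgroup.card_top, Nat.card_pi]
      simp [Nat.card_eq_fintype_card]
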